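/- If some LTL formula φ with Sz(φ) ≤ 2m − 1 separates 𝒫 and 𝒩, then the 3-CNF formula Φ over variables x₁,…,xₘ is satisfiable. -/

import Mathlib

namespace Temporal

/-- LTL formulas over a set of atomic propositions `P`. -/
inductive LTL (P : Type) : Type where
  | atom : P → LTL P
  | lnot : LTL P → LTL P
  | land : LTL P → LTL P → LTL P
  | lor : LTL P → LTL P → LTL P
  | limp : LTL P → LTL P → LTL P
  | liff : LTL P → LTL P → LTL P
  | next : LTL P → LTL P
  | fut : LTL P → LTL P
  | glob : LTL P → LTL P
  | untl : LTL P → LTL P → LTL P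
  | rel : LTL P → LTL P → LTL P
  | wuntl : LTL P → LTL P → LTL P
  | mrel : LTL P → LTL P → LTL P

variable {P : Type}

/-- Suffix `w[i:]` of an infinite word. -/
def shift (w : ℕ → Set P) (i : ℕ) : ℕ → Set P := fun n => w (n + i)

/-- The constant infinite word `α^ω`. -/
def constW (α : Set P) : ℕ → Set P := fun _ => α

/-- LTL semantics on infinite words. -/
def LTL.Sat : LTL P → (ℕ → Set P) → Prop
  | .atom p, w => p ∈ w 0
  | .lnot φ, w => ¬ φ.Sat w
  | .land φ ψ, w => φ.Sat w ∧ ψ.Sat w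
  | .lor φ ψ, w => φ.Sat w ∨ ψ.Sat w
  | .limp φ ψ, w => ¬ φ.Sat w ∨ ψ.Sat w
  | .liff φ ψ, w => (φ.Sat w ∧ ψ.Sat w) ∨ (¬ φ.Sat w ∧ ¬ ψ.Sat w)
  | .next φ, w => φ.Sat (shift w 1)
  | .fut φ, w => ∃ i, φ.Sat (shift w i)
  | .glob φ, w => ∀ i, φ.Sat (shift w i)
  | .untl φ ψ, w => ∃ i, ψ.Sat (shift w i) ∧ ∀ j < i, φ.Sat (shift w j)
  | .rel φ ψ, w => ¬ ∃ i, ¬ ψ.Sat (shift w i) ∧ ∀ j < i, ¬ φ.Sat (shift w j)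
  | .wuntl φ ψ, w =>
      (∃ i, ψ.Sat (shift w i) ∧ ∀ j < i, φ.Sat (shift w j)) ∨ ∀ i, φ.Sat (shift w i)
  | .mrel φ ψ, w =>
      (¬ ∃ i, ¬ ψ.Sat (shift w i) ∧ ∀ j < i, ¬ φ.Sat (shift w j)) ∧ ∃ i, φ.Sat (shift w i)

/-- The set of subformulas of an LTL formula. -/
def LTL.SubF : LTL P → Set (LTL P)
  | .atom p => {.atom p}
  | .lnot φ => insert (.lnot φ) φ.SubF
  | .land φ ψ => insert (.land φ ψ) (φ.SubF ∪ ψ.SubF)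
  | .lor φ ψ => insert (.lor φ ψ) (φ.SubF ∪ ψ.SubF)
  | .limp φ ψ => insert (.limp φ ψ) (φ.SubF ∪ ψ.SubF)
  | .liff φ ψ => insert (.liff φ ψ) (φ.SubF ∪ ψ.SubF)
  | .next φ => insert (.next φ) φ.SubF
  | .fut φ => insert (.fut φ) φ.SubF
  | .glob φ => insert (.glob φ) φ.SubF
  | .untl φ ψ => insert (.untl φ ψ) (φ.SubF ∪ ψ.SubF)
  | .rel φ ψ => insert (.rel φ ψ) (φ.SubF ∪ ψ.SubF)
  | .wuntl φ ψ => insert (.wuntl φ ψ) (φ.SubF ∪ ψ.SubF)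
  | .mrel φ ψ => insert (.mrel φ ψ) (φ.SubF ∪ ψ.SubF)

/-- The size of an LTL formula: its number of (distinct) subformulas. -/
noncomputable def LTL.Sz (φ : LTL P) : ℕ := φ.SubF.ncard

/-- The set of atomic propositions occurring in a formula. -/
def LTL.props (φ : LTL P) : Set P := {p : P | LTL.atom p ∈ φ.SubF}

/-- A formula is temporal-free if no temporal operator occurs in it. -/
inductive LTL.TemporalFree : LTL P → Prop
  | atom (p : P) : TemporalFree (.atom p)
  | lnot {φ : LTL P} : TemporalFree φ → TemporalFree (.lnot φ)
  | land {φ ψ : LTL P} : TemporalFree φ → TemporalFree ψ → TemporalFree (.land φ ψ)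
  | lor {φ ψ : LTL P} : TemporalFree φ → TemporalFree ψ → TemporalFree (.lor φ ψ)
  | limp {φ ψ : LTL P} : TemporalFree φ → TemporalFree ψ → TemporalFree (.limp φ ψ)
  | liff {φ ψ : LTL P} : TemporalFree φ → TemporalFree ψ → TemporalFree (.liff φ ψ)

/-- Concise formulas: atoms, and binary combinations of concise formulas over
disjoint sets of propositions. -/
inductive LTL.Concise : LTL P → Prop
  | atom (p : P) : Concise (.atom p)
  | land {φ ψ : LTL P} : Concise φ → Concise ψ → φ.props ∩ ψ.props = ∅ → Concise (.land φ ψ)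
  | lor {φ ψ : LTL P} : Concise φ → Concise ψ → φ.props ∩ ψ.props = ∅ → Concise (.lor φ ψ)
  | limp {φ ψ : LTL P} : Concise φ → Concise ψ → φ.props ∩ ψ.props = ∅ → Concise (.limp φ ψ)
  | liff {φ ψ : LTL P} : Concise φ → Concise ψ → φ.props ∩ ψ.props = ∅ → Concise (.liff φ ψ)
  | untl {φ ψ : LTL P} : Concise φ → Concise ψ → φ.props ∩ ψ.props = ∅ → Concise (.untl φ ψ)
  | rel {φ ψ : LTL P} : Concise φ → Concise ψ → φ.props ∩ ψ.props = ∅ → Concise (.rel φ ψ)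
  | wuntl {φ ψ : LTL P} : Concise φ → Concise ψ → φ.props ∩ ψ.props = ∅ → Concise (.wuntl φ ψ)
  | mrel {φ ψ : LTL P} : Concise φ → Concise ψ → φ.props ∩ ψ.props = ∅ → Concise (.mrel φ ψ)

/-- Formulas in which the only binary operator occurring is `∨`. -/
inductive LTL.OnlyOrBin : LTL P → Prop
  | atom (p : P) : OnlyOrBin (.atom p)
  | lnot {φ : LTL P} : OnlyOrBin φ → OnlyOrBin (.lnot φ)
  | lor {φ ψ : LTL P} : OnlyOrBin φ → OnlyOrBin ψ → OnlyOrBin (.lor φ ψ)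
  | next {φ : LTL P} : OnlyOrBin φ → OnlyOrBin (.next φ)
  | fut {φ : LTL P} : OnlyOrBin φ → OnlyOrBin (.fut φ)
  | glob {φ : LTL P} : OnlyOrBin φ → OnlyOrBin (.glob φ)

/-- Formulas that are disjunctions of atomic propositions, built using only `∨`. -/
inductive LTL.OrOfAtoms : LTL P → Prop
  | atom (p : P) : OrOfAtoms (.atom p)
  | lor {φ ψ : LTL P} : OrOfAtoms φ → OrOfAtoms ψ → OrOfAtoms (.lor φ ψ)

/- ### The 3-SAT reduction.
Variables `x_k` are indexed by `k < m`; the atomic proposition `(k, true)`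
represents `x_k` and `(k, false)` represents `x̄_k`. -/

/-- A literal: a variable index together with its polarity. -/
abbrev Lit := ℕ × Bool

/-- A 3-clause. -/
abbrev Clause3 := Lit × Lit × Lit

/-- A literal holds under a valuation. -/
def litSat (v : ℕ → Bool) (l : Lit) : Prop := v l.1 = l.2

/-- A clause holds under a valuation. -/
def clauseSat (v : ℕ → Bool) (c : Clause3) : Prop :=
  litSat v c.1 ∨ litSat v c.2.1 ∨ litSat v c.2.2

/-- A valuation satisfies a 3-CNF formula (a list of clauses). -/
def cnfSat (v : ℕ → Bool) (Φ : List Clause3) : Prop := ∀ c ∈ Φ, clauseSat v c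

/-- All variables of the 3-CNF formula are among `x_0, …, x_{m-1}`. -/
def cnfVars (m : ℕ) (Φ : List Clause3) : Prop :=
  ∀ c ∈ Φ, c.1.1 < m ∧ c.2.1.1 < m ∧ c.2.2.1 < m

/-- The letter `C_i = {l̃₁, l̃₂, l̃₃}` associated with a clause. -/
def clauseSet (c : Clause3) : Set Lit := {c.1, c.2.1, c.2.2}

/-- The pair `X_k = {x_k, x̄_k}` of propositions associated with variable `x_k`. -/
def rho (k : ℕ) : Set Lit := {(k, true), (k, false)}

/-- The set `𝒫` of positive words of the reduction. -/
def Pos (m : ℕ) (Φ : List Clause3) : Set (ℕ → Set Lit) :=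
  {w | (∃ c ∈ Φ, w = constW (clauseSet c)) ∨ ∃ k < m, w = constW (rho k)}

/-- The negative word `η = ∅^ω`. -/
def negWord : ℕ → Set Lit := constW ∅

/-- `φ` separates `𝒫` and `𝒩 = {η}`. -/
def Separates (m : ℕ) (Φ : List Clause3) (φ : LTL Lit) : Prop :=
  (∀ w ∈ Pos m Φ, φ.Sat w) ∧ ¬ φ.Sat negWord

/-- All propositions of `φ` are among `{x_k, x̄_k : k < m}`. -/
def propsInRange (m : ℕ) (φ : LTL Lit) : Prop := ∀ p ∈ φ.props, p.1 < m

/-- The disjunction `x_0^v ∨ x_1^v ∨ ⋯ ∨ x_{m-1}^v` (for `m ≥ 1`),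
where `x_k^v` is the atom `(k, v k)`. -/
def vDisj (v : ℕ → Bool) : ℕ → LTL Lit
  | 0 => .atom (0, v 0)
  | 1 => .atom (0, v 0)
  | (k + 2) => .lor (vDisj v (k + 1)) (.atom (k + 1, v (k + 1)))

/-- A formula is disjunctive on a set `I` of variable indices. -/
def DisjunctiveOn (I : Set ℕ) (φ : LTL Lit) : Prop :=
  φ.TemporalFree ∧ φ.Concise ∧ φ.OnlyOrBin ∧
    φ.props.ncard = I.ncard ∧ ∀ k ∈ I, (φ.props ∩ rho k).ncard = 1

/-- A formula is `I`-concise for a set `I` of variable indices. -/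
def IConciseOn (I : Set ℕ) (φ : LTL Lit) : Prop :=
  φ.Concise ∧ φ.props.ncard = I.ncard ∧ ∀ k ∈ I, (φ.props ∩ rho k).ncard = 1

/- ### CTL -/

/-- CTL (state) formulas over `P`; a quantified temporal subformula, e.g. `E(φ U ψ)`,
is a single constructor (`Bool` is the path quantifier: `true` = E, `false` = A). -/
inductive CTL (P : Type) : Type where
  | atom : P → CTL P
  | lnot : CTL P → CTL P
  | land : CTL P → CTL P → CTL P
  | lor : CTL P → CTL P → CTL P
  | limp : CTL P → CTL P → CTL P
  | liff : CTL P → CTL P → CTL P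
  | qnext : Bool → CTL P → CTL P
  | qfut : Bool → CTL P → CTL P
  | qglob : Bool → CTL P → CTL P
  | quntl : Bool → CTL P → CTL P → CTL P
  | qrel : Bool → CTL P → CTL P → CTL P
  | qwuntl : Bool → CTL P → CTL P → CTL P
  | qmrel : Bool → CTL P → CTL P → CTL P

/-- A Kripke structure over `P`. -/
structure Kripke (P : Type) where
  S : Type
  I : Set S
  R : S → S → Prop
  total : ∀ s : S, ∃ t : S, R s t
  L : S → Set P

/-- An infinite path of a Kripke structure. -/
def Kripke.IsPath (M : Kripke P) (π : ℕ → M.S) : Prop := ∀ i, M.R (π i) (π (i + 1))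

/-- Path quantification: `q = true` is `E` (some path from `s`), `q = false` is `A`. -/
def Kripke.Q (M : Kripke P) (q : Bool) (s : M.S) (pred : (ℕ → M.S) → Prop) : Prop :=
  if q then ∃ π : ℕ → M.S, M.IsPath π ∧ π 0 = s ∧ pred π
  else ∀ π : ℕ → M.S, M.IsPath π → π 0 = s → pred π

/-- CTL semantics at a state of a Kripke structure. -/
def CTL.Sat (M : Kripke P) : CTL P → M.S → Prop
  | .atom p, s => p ∈ M.L s
  | .lnot φ, s => ¬ φ.Sat M s
  | .land φ ψ, s => φ.Sat M s ∧ ψ.Sat M s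
  | .lor φ ψ, s => φ.Sat M s ∨ ψ.Sat M s
  | .limp φ ψ, s => ¬ φ.Sat M s ∨ ψ.Sat M s
  | .liff φ ψ, s => (φ.Sat M s ∧ ψ.Sat M s) ∨ (¬ φ.Sat M s ∧ ¬ ψ.Sat M s)
  | .qnext q φ, s => M.Q q s fun π => φ.Sat M (π 1)
  | .qfut q φ, s => M.Q q s fun π => ∃ i, φ.Sat M (π i)
  | .qglob q φ, s => M.Q q s fun π => ∀ i, φ.Sat M (π i)
  | .quntl q φ ψ, s => M.Q q s fun π => ∃ i, ψ.Sat M (π i) ∧ ∀ j < i, φ.Sat M (π j)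
  | .qrel q φ ψ, s => M.Q q s fun π => ¬ ∃ i, ¬ ψ.Sat M (π i) ∧ ∀ j < i, ¬ φ.Sat M (π j)
  | .qwuntl q φ ψ, s => M.Q q s fun π =>
      (∃ i, ψ.Sat M (π i) ∧ ∀ j < i, φ.Sat M (π j)) ∨ ∀ i, φ.Sat M (π i)
  | .qmrel q φ ψ, s => M.Q q s fun π =>
      (¬ ∃ i, ¬ ψ.Sat M (π i) ∧ ∀ j < i, ¬ φ.Sat M (π j)) ∧ ∃ i, φ.Sat M (π i)

/-- `M ⊨ φ`: the formula holds at every initial state. -/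
def Kripke.Models (M : Kripke P) (φ : CTL P) : Prop := ∀ s ∈ M.I, φ.Sat M s

/-- The set of subformulas of a CTL formula (a quantified temporal subformula counts
as a single subformula together with the subformulas of its arguments). -/
def CTL.SubF : CTL P → Set (CTL P)
  | .atom p => {.atom p}
  | .lnot φ => insert (.lnot φ) φ.SubF
  | .land φ ψ => insert (.land φ ψ) (φ.SubF ∪ ψ.SubF)
  | .lor φ ψ => insert (.lor φ ψ) (φ.SubF ∪ ψ.SubF)
  | .limp φ ψ => insert (.limp φ ψ) (φ.SubF ∪ ψ.SubF)
  | .liff φ ψ => insert (.liff φ ψ) (φ.SubF ∪ ψ.SubF)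
  | .qnext q φ => insert (.qnext q φ) φ.SubF
  | .qfut q φ => insert (.qfut q φ) φ.SubF
  | .qglob q φ => insert (.qglob q φ) φ.SubF
  | .quntl q φ ψ => insert (.quntl q φ ψ) (φ.SubF ∪ ψ.SubF)
  | .qrel q φ ψ => insert (.qrel q φ ψ) (φ.SubF ∪ ψ.SubF)
  | .qwuntl q φ ψ => insert (.qwuntl q φ ψ) (φ.SubF ∪ ψ.SubF)
  | .qmrel q φ ψ => insert (.qmrel q φ ψ) (φ.SubF ∪ ψ.SubF)

/-- The size of a CTL formula: its number of (distinct) subformulas. -/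
noncomputable def CTL.Sz (φ : CTL P) : ℕ := φ.SubF.ncard

/-- `f_{CTL→LTL}`: erase all path quantifiers. -/
def CTL.toLTL : CTL P → LTL P
  | .atom p => .atom p
  | .lnot φ => .lnot φ.toLTL
  | .land φ ψ => .land φ.toLTL ψ.toLTL
  | .lor φ ψ => .lor φ.toLTL ψ.toLTL
  | .limp φ ψ => .limp φ.toLTL ψ.toLTL
  | .liff φ ψ => .liff φ.toLTL ψ.toLTL
  | .qnext _ φ => .next φ.toLTL
  | .qfut _ φ => .fut φ.toLTL
  | .qglob _ φ => .glob φ.toLTL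
  | .quntl _ φ ψ => .untl φ.toLTL ψ.toLTL
  | .qrel _ φ ψ => .rel φ.toLTL ψ.toLTL
  | .qwuntl _ φ ψ => .wuntl φ.toLTL ψ.toLTL
  | .qmrel _ φ ψ => .mrel φ.toLTL ψ.toLTL

/-- `f_{LTL→CTL}`: insert the quantifier `E` before every temporal operator. -/
def LTL.toCTL : LTL P → CTL P
  | .atom p => .atom p
  | .lnot φ => .lnot φ.toCTL
  | .land φ ψ => .land φ.toCTL ψ.toCTL
  | .lor φ ψ => .lor φ.toCTL ψ.toCTL
  | .limp φ ψ => .limp φ.toCTL ψ.toCTL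
  | .liff φ ψ => .liff φ.toCTL ψ.toCTL
  | .next φ => .qnext true φ.toCTL
  | .fut φ => .qfut true φ.toCTL
  | .glob φ => .qglob true φ.toCTL
  | .untl φ ψ => .quntl true φ.toCTL ψ.toCTL
  | .rel φ ψ => .qrel true φ.toCTL ψ.toCTL
  | .wuntl φ ψ => .qwuntl true φ.toCTL ψ.toCTL
  | .mrel φ ψ => .qmrel true φ.toCTL ψ.toCTL

/-- The one-state Kripke structure `M_{α^ω}`. -/
def singleKripke (α : Set P) : Kripke P where
  S := Unit
  I := Set.univ
  R := fun _ _ => True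
  total := fun s => ⟨s, trivial⟩
  L := fun _ => α


section AuxHard

open Classical

variable {P : Type}

/-- Node count of a formula. -/
def LTL.nodes : LTL P → ℕ
  | .atom _ => 1
  | .lnot φ => φ.nodes + 1
  | .land φ ψ => φ.nodes + ψ.nodes + 1
  | .lor φ ψ => φ.nodes + ψ.nodes + 1
  | .limp φ ψ => φ.nodes + ψ.nodes + 1
  | .liff φ ψ => φ.nodes + ψ.nodes + 1
  | .next φ => φ.nodes + 1
  | .fut φ => φ.nodes + 1
  | .glob φ => φ.nodes + 1
  | .untl φ ψ => φ.nodes + ψ.nodes + 1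
  | .rel φ ψ => φ.nodes + ψ.nodes + 1
  | .wuntl φ ψ => φ.nodes + ψ.nodes + 1
  | .mrel φ ψ => φ.nodes + ψ.nodes + 1

lemma LTL.one_le_nodes (φ : LTL P) : 1 ≤ φ.nodes := by
  cases φ <;> simp [LTL.nodes]

lemma LTL.mem_subF_self (φ : LTL P) : φ ∈ φ.SubF := by
  cases φ <;> simp [LTL.SubF]

lemma LTL.subF_finite (φ : LTL P) : φ.SubF.Finite := by
  induction φ with
  | atom p => exact Set.finite_singleton _
  | lnot χ ih => exact ih.insert _
  | next χ ih => exact ih.insert _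
  | fut χ ih => exact ih.insert _
  | glob χ ih => exact ih.insert _
  | land χ₁ χ₂ ih1 ih2 => exact (ih1.union ih2).insert _
  | lor χ₁ χ₂ ih1 ih2 => exact (ih1.union ih2).insert _
  | limp χ₁ χ₂ ih1 ih2 => exact (ih1.union ih2).insert _
  | liff χ₁ χ₂ ih1 ih2 => exact (ih1.union ih2).insert _
  | untl χ₁ χ₂ ih1 ih2 => exact (ih1.union ih2).insert _
  | rel χ₁ χ₂ ih1 ih2 => exact (ih1.union ih2).insert _
  | wuntl χ₁ χ₂ ih1 ih2 => exact (ih1.union ih2).insert _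
  | mrel χ₁ χ₂ ih1 ih2 => exact (ih1.union ih2).insert _

lemma LTL.nodes_le_of_mem_subF (φ : LTL P) : ∀ ψ ∈ φ.SubF, LTL.nodes ψ ≤ φ.nodes := by
  induction φ with
  | atom p =>
      intro ψ h
      simp only [LTL.SubF, Set.mem_singleton_iff] at h
      subst h; exact le_refl _
  | lnot χ ih =>
      intro ψ h
      rcases Set.mem_insert_iff.1 h with rfl | h
      · exact le_refl _
      · exact le_trans (ih ψ h) (by simp only [LTL.nodes]; omega)
  | next χ ih =>
      intro ψ h
      rcases Set.mem_insert_iff.1 h with rfl | h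
      · exact le_refl _
      · exact le_trans (ih ψ h) (by simp only [LTL.nodes]; omega)
  | fut χ ih =>
      intro ψ h
      rcases Set.mem_insert_iff.1 h with rfl | h
      · exact le_refl _
      · exact le_trans (ih ψ h) (by simp only [LTL.nodes]; omega)
  | glob χ ih =>
      intro ψ h
      rcases Set.mem_insert_iff.1 h with rfl | h
      · exact le_refl _
      · exact le_trans (ih ψ h) (by simp only [LTL.nodes]; omega)
  | land χ₁ χ₂ ih1 ih2 =>
      intro ψ h
      rcases Set.mem_insert_iff.1 h with rfl | h
      · exact le_refl _
      · rcases h with h | h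
        · exact le_trans (ih1 ψ h) (by simp only [LTL.nodes]; omega)
        · exact le_trans (ih2 ψ h) (by simp only [LTL.nodes]; omega)
  | lor χ₁ χ₂ ih1 ih2 =>
      intro ψ h
      rcases Set.mem_insert_iff.1 h with rfl | h
      · exact le_refl _
      · rcases h with h | h
        · exact le_trans (ih1 ψ h) (by simp only [LTL.nodes]; omega)
        · exact le_trans (ih2 ψ h) (by simp only [LTL.nodes]; omega)
  | limp χ₁ χ₂ ih1 ih2 =>
      intro ψ h
      rcases Set.mem_insert_iff.1 h with rfl | h
      · exact le_refl _
      · rcases h with h | h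
        · exact le_trans (ih1 ψ h) (by simp only [LTL.nodes]; omega)
        · exact le_trans (ih2 ψ h) (by simp only [LTL.nodes]; omega)
  | liff χ₁ χ₂ ih1 ih2 =>
      intro ψ h
      rcases Set.mem_insert_iff.1 h with rfl | h
      · exact le_refl _
      · rcases h with h | h
        · exact le_trans (ih1 ψ h) (by simp only [LTL.nodes]; omega)
        · exact le_trans (ih2 ψ h) (by simp only [LTL.nodes]; omega)
  | untl χ₁ χ₂ ih1 ih2 =>
      intro ψ h
      rcases Set.mem_insert_iff.1 h with rfl | h
      · exact le_refl _
      · rcases h with h | h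
        · exact le_trans (ih1 ψ h) (by simp only [LTL.nodes]; omega)
        · exact le_trans (ih2 ψ h) (by simp only [LTL.nodes]; omega)
  | rel χ₁ χ₂ ih1 ih2 =>
      intro ψ h
      rcases Set.mem_insert_iff.1 h with rfl | h
      · exact le_refl _
      · rcases h with h | h
        · exact le_trans (ih1 ψ h) (by simp only [LTL.nodes]; omega)
        · exact le_trans (ih2 ψ h) (by simp only [LTL.nodes]; omega)
  | wuntl χ₁ χ₂ ih1 ih2 =>
      intro ψ h
      rcases Set.mem_insert_iff.1 h with rfl | h
      · exact le_refl _
      · rcases h with h | h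
        · exact le_trans (ih1 ψ h) (by simp only [LTL.nodes]; omega)
        · exact le_trans (ih2 ψ h) (by simp only [LTL.nodes]; omega)
  | mrel χ₁ χ₂ ih1 ih2 =>
      intro ψ h
      rcases Set.mem_insert_iff.1 h with rfl | h
      · exact le_refl _
      · rcases h with h | h
        · exact le_trans (ih1 ψ h) (by simp only [LTL.nodes]; omega)
        · exact le_trans (ih2 ψ h) (by simp only [LTL.nodes]; omega)

lemma LTL.mem_subF_trans (φ : LTL P) : ∀ ψ ∈ φ.SubF, LTL.SubF ψ ⊆ φ.SubF := by
  induction φ with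
  | atom p =>
      intro ψ h
      simp only [LTL.SubF, Set.mem_singleton_iff] at h
      subst h; exact le_refl _
  | lnot χ ih =>
      intro ψ h
      rcases Set.mem_insert_iff.1 h with rfl | h
      · exact le_refl _
      · exact (ih ψ h).trans (Set.subset_insert _ _)
  | next χ ih =>
      intro ψ h
      rcases Set.mem_insert_iff.1 h with rfl | h
      · exact le_refl _
      · exact (ih ψ h).trans (Set.subset_insert _ _)
  | fut χ ih =>
      intro ψ h
      rcases Set.mem_insert_iff.1 h with rfl | h
      · exact le_refl _
      · exact (ih ψ h).trans (Set.subset_insert _ _)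
  | glob χ ih =>
      intro ψ h
      rcases Set.mem_insert_iff.1 h with rfl | h
      · exact le_refl _
      · exact (ih ψ h).trans (Set.subset_insert _ _)
  | land χ₁ χ₂ ih1 ih2 =>
      intro ψ h
      rcases Set.mem_insert_iff.1 h with rfl | h
      · exact le_refl _
      · rcases h with h | h
        · exact ((ih1 ψ h).trans Set.subset_union_left).trans (Set.subset_insert _ _)
        · exact ((ih2 ψ h).trans Set.subset_union_right).trans (Set.subset_insert _ _)
  | lor χ₁ χ₂ ih1 ih2 =>
      intro ψ h
      rcases Set.mem_insert_iff.1 h with rfl | h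
      · exact le_refl _
      · rcases h with h | h
        · exact ((ih1 ψ h).trans Set.subset_union_left).trans (Set.subset_insert _ _)
        · exact ((ih2 ψ h).trans Set.subset_union_right).trans (Set.subset_insert _ _)
  | limp χ₁ χ₂ ih1 ih2 =>
      intro ψ h
      rcases Set.mem_insert_iff.1 h with rfl | h
      · exact le_refl _
      · rcases h with h | h
        · exact ((ih1 ψ h).trans Set.subset_union_left).trans (Set.subset_insert _ _)
        · exact ((ih2 ψ h).trans Set.subset_union_right).trans (Set.subset_insert _ _)
  | liff χ₁ χ₂ ih1 ih2 =>
      intro ψ h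
      rcases Set.mem_insert_iff.1 h with rfl | h
      · exact le_refl _
      · rcases h with h | h
        · exact ((ih1 ψ h).trans Set.subset_union_left).trans (Set.subset_insert _ _)
        · exact ((ih2 ψ h).trans Set.subset_union_right).trans (Set.subset_insert _ _)
  | untl χ₁ χ₂ ih1 ih2 =>
      intro ψ h
      rcases Set.mem_insert_iff.1 h with rfl | h
      · exact le_refl _
      · rcases h with h | h
        · exact ((ih1 ψ h).trans Set.subset_union_left).trans (Set.subset_insert _ _)
        · exact ((ih2 ψ h).trans Set.subset_union_right).trans (Set.subset_insert _ _)
  | rel χ₁ χ₂ ih1 ih2 =>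
      intro ψ h
      rcases Set.mem_insert_iff.1 h with rfl | h
      · exact le_refl _
      · rcases h with h | h
        · exact ((ih1 ψ h).trans Set.subset_union_left).trans (Set.subset_insert _ _)
        · exact ((ih2 ψ h).trans Set.subset_union_right).trans (Set.subset_insert _ _)
  | wuntl χ₁ χ₂ ih1 ih2 =>
      intro ψ h
      rcases Set.mem_insert_iff.1 h with rfl | h
      · exact le_refl _
      · rcases h with h | h
        · exact ((ih1 ψ h).trans Set.subset_union_left).trans (Set.subset_insert _ _)
        · exact ((ih2 ψ h).trans Set.subset_union_right).trans (Set.subset_insert _ _)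
  | mrel χ₁ χ₂ ih1 ih2 =>
      intro ψ h
      rcases Set.mem_insert_iff.1 h with rfl | h
      · exact le_refl _
      · rcases h with h | h
        · exact ((ih1 ψ h).trans Set.subset_union_left).trans (Set.subset_insert _ _)
        · exact ((ih2 ψ h).trans Set.subset_union_right).trans (Set.subset_insert _ _)

lemma LTL.atom_injective : Function.Injective (LTL.atom : P → LTL P) := by
  intro a b h; injection h

lemma LTL.props_finite (φ : LTL P) : φ.props.Finite := by
  have h : φ.props = LTL.atom ⁻¹' φ.SubF := rfl
  rw [h]
  exact (φ.subF_finite).preimage (Set.injOn_of_injective LTL.atom_injective)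

lemma LTL.props_atom (p : P) : (LTL.atom p : LTL P).props = {p} := by
  ext q; simp [LTL.props, LTL.SubF]

lemma LTL.props_lnot (φ : LTL P) : (LTL.lnot φ).props = φ.props := by
  ext q; simp [LTL.props, LTL.SubF]
lemma LTL.props_next (φ : LTL P) : (LTL.next φ).props = φ.props := by
  ext q; simp [LTL.props, LTL.SubF]
lemma LTL.props_fut (φ : LTL P) : (LTL.fut φ).props = φ.props := by
  ext q; simp [LTL.props, LTL.SubF]
lemma LTL.props_glob (φ : LTL P) : (LTL.glob φ).props = φ.props := by
  ext q; simp [LTL.props, LTL.SubF]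
lemma LTL.props_land (φ ψ : LTL P) : (LTL.land φ ψ).props = φ.props ∪ ψ.props := by
  ext q; simp [LTL.props, LTL.SubF]
lemma LTL.props_lor (φ ψ : LTL P) : (LTL.lor φ ψ).props = φ.props ∪ ψ.props := by
  ext q; simp [LTL.props, LTL.SubF]
lemma LTL.props_limp (φ ψ : LTL P) : (LTL.limp φ ψ).props = φ.props ∪ ψ.props := by
  ext q; simp [LTL.props, LTL.SubF]
lemma LTL.props_liff (φ ψ : LTL P) : (LTL.liff φ ψ).props = φ.props ∪ ψ.props := by
  ext q; simp [LTL.props, LTL.SubF]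
lemma LTL.props_untl (φ ψ : LTL P) : (LTL.untl φ ψ).props = φ.props ∪ ψ.props := by
  ext q; simp [LTL.props, LTL.SubF]
lemma LTL.props_rel (φ ψ : LTL P) : (LTL.rel φ ψ).props = φ.props ∪ ψ.props := by
  ext q; simp [LTL.props, LTL.SubF]
lemma LTL.props_wuntl (φ ψ : LTL P) : (LTL.wuntl φ ψ).props = φ.props ∪ ψ.props := by
  ext q; simp [LTL.props, LTL.SubF]
lemma LTL.props_mrel (φ ψ : LTL P) : (LTL.mrel φ ψ).props = φ.props ∪ ψ.props := by
  ext q; simp [LTL.props, LTL.SubF]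

end AuxHard


section AuxHard2

open Classical

variable {P : Type}

lemma shift_constW (α : Set P) (i : ℕ) : shift (constW α) i = constW α := rfl

/-- On constant words, satisfaction only depends on the letter restricted to the
propositions of the formula. -/
lemma LTL.sat_const_congr : ∀ (φ : LTL P) (α β : Set P),
    (∀ p ∈ φ.props, (p ∈ α ↔ p ∈ β)) → (φ.Sat (constW α) ↔ φ.Sat (constW β)) := by
  intro φ
  induction φ with
  | atom p =>
      intro α β h
      simpa [LTL.Sat, constW] using h p (by rw [LTL.props_atom]; exact rfl)
  | lnot χ ih =>
      intro α β h
      have h' := fun p hp => h p (by rw [LTL.props_lnot]; exact hp)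
      simp only [LTL.Sat, ih α β h']
  | next χ ih =>
      intro α β h
      have h' := fun p hp => h p (by rw [LTL.props_next]; exact hp)
      simp only [LTL.Sat, shift_constW, ih α β h']
  | fut χ ih =>
      intro α β h
      have h' := fun p hp => h p (by rw [LTL.props_fut]; exact hp)
      simp only [LTL.Sat, shift_constW, ih α β h']
  | glob χ ih =>
      intro α β h
      have h' := fun p hp => h p (by rw [LTL.props_glob]; exact hp)
      simp only [LTL.Sat, shift_constW, ih α β h']
  | land χ₁ χ₂ ih1 ih2 =>
      intro α β h
      have h1 := fun p hp => h p (by rw [LTL.props_land]; exact Or.inl hp)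
      have h2 := fun p hp => h p (by rw [LTL.props_land]; exact Or.inr hp)
      simp only [LTL.Sat, ih1 α β h1, ih2 α β h2]
  | lor χ₁ χ₂ ih1 ih2 =>
      intro α β h
      have h1 := fun p hp => h p (by rw [LTL.props_lor]; exact Or.inl hp)
      have h2 := fun p hp => h p (by rw [LTL.props_lor]; exact Or.inr hp)
      simp only [LTL.Sat, ih1 α β h1, ih2 α β h2]
  | limp χ₁ χ₂ ih1 ih2 =>
      intro α β h
      have h1 := fun p hp => h p (by rw [LTL.props_limp]; exact Or.inl hp)
      have h2 := fun p hp => h p (by rw [LTL.props_limp]; exact Or.inr hp)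
      simp only [LTL.Sat, ih1 α β h1, ih2 α β h2]
  | liff χ₁ χ₂ ih1 ih2 =>
      intro α β h
      have h1 := fun p hp => h p (by rw [LTL.props_liff]; exact Or.inl hp)
      have h2 := fun p hp => h p (by rw [LTL.props_liff]; exact Or.inr hp)
      simp only [LTL.Sat, ih1 α β h1, ih2 α β h2]
  | untl χ₁ χ₂ ih1 ih2 =>
      intro α β h
      have h1 := fun p hp => h p (by rw [LTL.props_untl]; exact Or.inl hp)
      have h2 := fun p hp => h p (by rw [LTL.props_untl]; exact Or.inr hp)
      simp only [LTL.Sat, shift_constW, ih1 α β h1, ih2 α β h2]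
  | rel χ₁ χ₂ ih1 ih2 =>
      intro α β h
      have h1 := fun p hp => h p (by rw [LTL.props_rel]; exact Or.inl hp)
      have h2 := fun p hp => h p (by rw [LTL.props_rel]; exact Or.inr hp)
      simp only [LTL.Sat, shift_constW, ih1 α β h1, ih2 α β h2]
  | wuntl χ₁ χ₂ ih1 ih2 =>
      intro α β h
      have h1 := fun p hp => h p (by rw [LTL.props_wuntl]; exact Or.inl hp)
      have h2 := fun p hp => h p (by rw [LTL.props_wuntl]; exact Or.inr hp)
      simp only [LTL.Sat, shift_constW, ih1 α β h1, ih2 α β h2]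
  | mrel χ₁ χ₂ ih1 ih2 =>
      intro α β h
      have h1 := fun p hp => h p (by rw [LTL.props_mrel]; exact Or.inl hp)
      have h2 := fun p hp => h p (by rw [LTL.props_mrel]; exact Or.inr hp)
      simp only [LTL.Sat, shift_constW, ih1 α β h1, ih2 α β h2]

/-- Non-atomic formulas. -/
def NAt : Set (LTL P) := {ψ | ∀ p, ψ ≠ LTL.atom p}

/-- Atoms literally contained in a set of formulas. -/
def Cov (B : Set (LTL P)) : Set P := {p | LTL.atom p ∈ B}

end AuxHard2


section AuxHard3

open Classical

variable {P : Type}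

lemma unary_step (φ ψ : LTL P)
    (hsub : φ.SubF = insert φ ψ.SubF) (hpr : φ.props = ψ.props)
    (ih : ∀ B : Set (LTL P), (∀ χ ∈ B, LTL.SubF χ ⊆ B) → ψ ∉ B →
      (ψ.props \ Cov B).ncard ≤ ((ψ.SubF ∩ NAt) \ B).ncard + 1)
    (B : Set (LTL P)) (hB : ∀ χ ∈ B, LTL.SubF χ ⊆ B) (hφB : φ ∉ B) :
    (φ.props \ Cov B).ncard ≤ ((φ.SubF ∩ NAt) \ B).ncard + 1 := by
  have hfinφ : ((φ.SubF ∩ NAt) \ B).Finite := ((φ.subF_finite.inter_of_left _).diff)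
  by_cases h : ψ ∈ B
  · have : φ.props \ Cov B = ∅ := by
      rw [hpr]
      apply Set.diff_eq_empty.2
      intro p hp
      exact hB ψ h hp
    simp [this]
  · calc (φ.props \ Cov B).ncard = (ψ.props \ Cov B).ncard := by rw [hpr]
      _ ≤ ((ψ.SubF ∩ NAt) \ B).ncard + 1 := ih B hB h
      _ ≤ ((φ.SubF ∩ NAt) \ B).ncard + 1 := by
          have hss : (ψ.SubF ∩ NAt) \ B ⊆ (φ.SubF ∩ NAt) \ B := by
            intro x hx
            exact ⟨⟨by rw [hsub]; exact Set.subset_insert _ _ hx.1.1, hx.1.2⟩, hx.2⟩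
          exact Nat.add_le_add_right (Set.ncard_le_ncard hss hfinφ) 1

lemma binary_step (φ ψ₁ ψ₂ : LTL P)
    (hsub : φ.SubF = insert φ (ψ₁.SubF ∪ ψ₂.SubF))
    (hpr : φ.props = ψ₁.props ∪ ψ₂.props)
    (hna : φ ∈ (NAt : Set (LTL P)))
    (hn1 : φ ∉ ψ₁.SubF) (hn2 : φ ∉ ψ₂.SubF)
    (ih1 : ∀ B : Set (LTL P), (∀ χ ∈ B, LTL.SubF χ ⊆ B) → ψ₁ ∉ B →
      (ψ₁.props \ Cov B).ncard ≤ ((ψ₁.SubF ∩ NAt) \ B).ncard + 1)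
    (ih2 : ∀ B : Set (LTL P), (∀ χ ∈ B, LTL.SubF χ ⊆ B) → ψ₂ ∉ B →
      (ψ₂.props \ Cov B).ncard ≤ ((ψ₂.SubF ∩ NAt) \ B).ncard + 1)
    (B : Set (LTL P)) (hB : ∀ χ ∈ B, LTL.SubF χ ⊆ B) (hφB : φ ∉ B) :
    (φ.props \ Cov B).ncard ≤ ((φ.SubF ∩ NAt) \ B).ncard + 1 := by
  have hfinφ : ((φ.SubF ∩ NAt) \ B).Finite := ((φ.subF_finite.inter_of_left _).diff)
  have hsub1 : ψ₁.SubF ⊆ φ.SubF := by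
    rw [hsub]; exact Set.subset_union_left.trans (Set.subset_insert _ _)
  have hsub2 : ψ₂.SubF ⊆ φ.SubF := by
    rw [hsub]; exact Set.subset_union_right.trans (Set.subset_insert _ _)
  have hmono1 : ((ψ₁.SubF ∩ NAt) \ B).ncard ≤ ((φ.SubF ∩ NAt) \ B).ncard := by
    apply Set.ncard_le_ncard _ hfinφ
    intro x hx; exact ⟨⟨hsub1 hx.1.1, hx.1.2⟩, hx.2⟩
  have hmono2 : ((ψ₂.SubF ∩ NAt) \ B).ncard ≤ ((φ.SubF ∩ NAt) \ B).ncard := by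
    apply Set.ncard_le_ncard _ hfinφ
    intro x hx; exact ⟨⟨hsub2 hx.1.1, hx.1.2⟩, hx.2⟩
  by_cases h1 : ψ₁ ∈ B
  · have hA1 : ψ₁.props ⊆ Cov B := fun p hp => hB ψ₁ h1 hp
    by_cases h2 : ψ₂ ∈ B
    · have : φ.props \ Cov B = ∅ := by
        rw [hpr]
        apply Set.diff_eq_empty.2
        exact Set.union_subset hA1 (fun p hp => hB ψ₂ h2 hp)
      simp [this]
    · calc (φ.props \ Cov B).ncard ≤ (ψ₂.props \ Cov B).ncard := by
            apply Set.ncard_le_ncard _ ((ψ₂.props_finite).diff)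
            rw [hpr]
            rintro p ⟨hp, hpc⟩
            exact ⟨hp.resolve_left (fun h => hpc (hA1 h)), hpc⟩
        _ ≤ ((ψ₂.SubF ∩ NAt) \ B).ncard + 1 := ih2 B hB h2
        _ ≤ _ := Nat.add_le_add_right hmono2 1
  · by_cases h2 : ψ₂ ∈ B ∪ ψ₁.SubF
    · have hA2 : ψ₂.props ⊆ Cov B ∪ ψ₁.props := by
        rcases h2 with h2 | h2
        · exact fun p hp => Or.inl (hB ψ₂ h2 hp)
        · exact fun p hp => Or.inr (ψ₁.mem_subF_trans ψ₂ h2 hp)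
      calc (φ.props \ Cov B).ncard ≤ (ψ₁.props \ Cov B).ncard := by
            apply Set.ncard_le_ncard _ ((ψ₁.props_finite).diff)
            rw [hpr]
            rintro p ⟨hp, hpc⟩
            refine ⟨?_, hpc⟩
            rcases hp with h | h
            · exact h
            · exact (hA2 h).resolve_left hpc
        _ ≤ ((ψ₁.SubF ∩ NAt) \ B).ncard + 1 := ih1 B hB h1
        _ ≤ _ := Nat.add_le_add_right hmono1 1
    · rw [Set.mem_union] at h2
      push_neg at h2
      obtain ⟨h2B, h2S⟩ := h2
      set B' : Set (LTL P) := B ∪ ψ₁.SubF with hB'def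
      have hB' : ∀ χ ∈ B', LTL.SubF χ ⊆ B' := by
        intro χ hχ
        rcases hχ with h | h
        · exact (hB χ h).trans Set.subset_union_left
        · exact (ψ₁.mem_subF_trans χ h).trans Set.subset_union_right
      have e1 := ih1 B hB h1
      have e2 := ih2 B' hB' (by rw [hB'def]; rw [Set.mem_union]; push_neg; exact ⟨h2B, h2S⟩)
      have hCov' : Cov B' = Cov B ∪ ψ₁.props := rfl
      -- right-hand side split
      have hsplit : (φ.props \ Cov B).ncard ≤
          (ψ₁.props \ Cov B).ncard + (ψ₂.props \ Cov B').ncard := by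
        have hss : φ.props \ Cov B ⊆ (ψ₁.props \ Cov B) ∪ (ψ₂.props \ Cov B') := by
          rw [hpr, hCov']
          rintro p ⟨hp, hpc⟩
          rcases hp with h | h
          · exact Or.inl ⟨h, hpc⟩
          · by_cases hp1 : p ∈ ψ₁.props
            · exact Or.inl ⟨hp1, hpc⟩
            · exact Or.inr ⟨h, fun hc => hc.elim hpc hp1⟩
        exact le_trans
          (Set.ncard_le_ncard hss (((ψ₁.props_finite).diff).union ((ψ₂.props_finite).diff)))
          (Set.ncard_union_le _ _)
      -- left-hand side: the three parts are disjoint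
      set D1 : Set (LTL P) := (ψ₁.SubF ∩ NAt) \ B with hD1
      set D2 : Set (LTL P) := (ψ₂.SubF ∩ NAt) \ B' with hD2
      have hD1fin : D1.Finite := ((ψ₁.subF_finite.inter_of_left _).diff)
      have hD2fin : D2.Finite := ((ψ₂.subF_finite.inter_of_left _).diff)
      have hdisj : Disjoint D1 D2 := by
        rw [Set.disjoint_left]
        rintro x ⟨hx1, _⟩ ⟨_, hx2⟩
        exact hx2 (Or.inr hx1.1)
      have hφD : φ ∉ D1 ∪ D2 := by
        rintro (h | h)
        · exact hn1 h.1.1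
        · exact hn2 h.1.1
      have hins : insert φ (D1 ∪ D2) ⊆ (φ.SubF ∩ NAt) \ B := by
        rintro x (rfl | hx)
        · exact ⟨⟨LTL.mem_subF_self _, hna⟩, hφB⟩
        · rcases hx with h | h
          · exact ⟨⟨hsub1 h.1.1, h.1.2⟩, h.2⟩
          · exact ⟨⟨hsub2 h.1.1, h.1.2⟩, fun hc => h.2 (Or.inl hc)⟩
      have hcard : D1.ncard + D2.ncard + 1 ≤ ((φ.SubF ∩ NAt) \ B).ncard := by
        have h1' : (insert φ (D1 ∪ D2)).ncard = (D1 ∪ D2).ncard + 1 :=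
          Set.ncard_insert_of_notMem hφD (hD1fin.union hD2fin)
        have h2' : (D1 ∪ D2).ncard = D1.ncard + D2.ncard :=
          Set.ncard_union_eq hdisj hD1fin hD2fin
        have h3' : (insert φ (D1 ∪ D2)).ncard ≤ ((φ.SubF ∩ NAt) \ B).ncard :=
          Set.ncard_le_ncard hins hfinφ
        omega
      omega

lemma count_aux : ∀ (φ : LTL P) (B : Set (LTL P)),
    (∀ χ ∈ B, LTL.SubF χ ⊆ B) → φ ∉ B →
    (φ.props \ Cov B).ncard ≤ ((φ.SubF ∩ NAt) \ B).ncard + 1 := by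
  intro φ
  induction φ with
  | atom p =>
      intro B hB hφB
      have h : ((LTL.atom p : LTL P).props \ Cov B).ncard ≤ ({p} : Set P).ncard := by
        apply Set.ncard_le_ncard _ (Set.finite_singleton _)
        rw [LTL.props_atom]
        exact Set.diff_subset
      have hp1 : ({p} : Set P).ncard = 1 := Set.ncard_singleton p
      omega
  | lnot χ ih => exact unary_step _ _ rfl (LTL.props_lnot χ) ih
  | next χ ih => exact unary_step _ _ rfl (LTL.props_next χ) ih
  | fut χ ih => exact unary_step _ _ rfl (LTL.props_fut χ) ih
  | glob χ ih => exact unary_step _ _ rfl (LTL.props_glob χ) ih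
  | land χ₁ χ₂ ih1 ih2 =>
      refine binary_step _ _ _ rfl (LTL.props_land χ₁ χ₂) (fun p h => by cases h) ?_ ?_ ih1 ih2
      · intro h
        have := χ₁.nodes_le_of_mem_subF _ h
        have h1 := χ₂.one_le_nodes
        simp only [LTL.nodes] at this; omega
      · intro h
        have := χ₂.nodes_le_of_mem_subF _ h
        have h1 := χ₁.one_le_nodes
        simp only [LTL.nodes] at this; omega
  | lor χ₁ χ₂ ih1 ih2 =>
      refine binary_step _ _ _ rfl (LTL.props_lor χ₁ χ₂) (fun p h => by cases h) ?_ ?_ ih1 ih2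
      · intro h
        have := χ₁.nodes_le_of_mem_subF _ h
        have h1 := χ₂.one_le_nodes
        simp only [LTL.nodes] at this; omega
      · intro h
        have := χ₂.nodes_le_of_mem_subF _ h
        have h1 := χ₁.one_le_nodes
        simp only [LTL.nodes] at this; omega
  | limp χ₁ χ₂ ih1 ih2 =>
      refine binary_step _ _ _ rfl (LTL.props_limp χ₁ χ₂) (fun p h => by cases h) ?_ ?_ ih1 ih2
      · intro h
        have := χ₁.nodes_le_of_mem_subF _ h
        have h1 := χ₂.one_le_nodes
        simp only [LTL.nodes] at this; omega
      · intro h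
        have := χ₂.nodes_le_of_mem_subF _ h
        have h1 := χ₁.one_le_nodes
        simp only [LTL.nodes] at this; omega
  | liff χ₁ χ₂ ih1 ih2 =>
      refine binary_step _ _ _ rfl (LTL.props_liff χ₁ χ₂) (fun p h => by cases h) ?_ ?_ ih1 ih2
      · intro h
        have := χ₁.nodes_le_of_mem_subF _ h
        have h1 := χ₂.one_le_nodes
        simp only [LTL.nodes] at this; omega
      · intro h
        have := χ₂.nodes_le_of_mem_subF _ h
        have h1 := χ₁.one_le_nodes
        simp only [LTL.nodes] at this; omega
  | untl χ₁ χ₂ ih1 ih2 =>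
      refine binary_step _ _ _ rfl (LTL.props_untl χ₁ χ₂) (fun p h => by cases h) ?_ ?_ ih1 ih2
      · intro h
        have := χ₁.nodes_le_of_mem_subF _ h
        have h1 := χ₂.one_le_nodes
        simp only [LTL.nodes] at this; omega
      · intro h
        have := χ₂.nodes_le_of_mem_subF _ h
        have h1 := χ₁.one_le_nodes
        simp only [LTL.nodes] at this; omega
  | rel χ₁ χ₂ ih1 ih2 =>
      refine binary_step _ _ _ rfl (LTL.props_rel χ₁ χ₂) (fun p h => by cases h) ?_ ?_ ih1 ih2
      · intro h
        have := χ₁.nodes_le_of_mem_subF _ h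
        have h1 := χ₂.one_le_nodes
        simp only [LTL.nodes] at this; omega
      · intro h
        have := χ₂.nodes_le_of_mem_subF _ h
        have h1 := χ₁.one_le_nodes
        simp only [LTL.nodes] at this; omega
  | wuntl χ₁ χ₂ ih1 ih2 =>
      refine binary_step _ _ _ rfl (LTL.props_wuntl χ₁ χ₂) (fun p h => by cases h) ?_ ?_ ih1 ih2
      · intro h
        have := χ₁.nodes_le_of_mem_subF _ h
        have h1 := χ₂.one_le_nodes
        simp only [LTL.nodes] at this; omega
      · intro h
        have := χ₂.nodes_le_of_mem_subF _ h
        have h1 := χ₁.one_le_nodes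
        simp only [LTL.nodes] at this; omega
  | mrel χ₁ χ₂ ih1 ih2 =>
      refine binary_step _ _ _ rfl (LTL.props_mrel χ₁ χ₂) (fun p h => by cases h) ?_ ?_ ih1 ih2
      · intro h
        have := χ₁.nodes_le_of_mem_subF _ h
        have h1 := χ₂.one_le_nodes
        simp only [LTL.nodes] at this; omega
      · intro h
        have := χ₂.nodes_le_of_mem_subF _ h
        have h1 := χ₁.one_le_nodes
        simp only [LTL.nodes] at this; omega

/-- `Sz` splits as atoms plus non-atoms. -/
lemma sz_split (φ : LTL P) : φ.Sz = φ.props.ncard + (φ.SubF ∩ NAt).ncard := by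
  have hfin := φ.subF_finite
  have h1 : φ.SubF \ NAt = LTL.atom '' φ.props := by
    ext ψ
    constructor
    · rintro ⟨hs, hn⟩
      simp only [NAt, Set.mem_setOf_eq, not_forall, not_not] at hn
      obtain ⟨p, rfl⟩ := hn
      exact ⟨p, hs, rfl⟩
    · rintro ⟨p, hp, rfl⟩
      exact ⟨hp, fun h => h p rfl⟩
  have h2 : (φ.SubF ∩ NAt).ncard + (φ.SubF \ NAt).ncard = φ.SubF.ncard :=
    Set.ncard_inter_add_ncard_diff_eq_ncard _ _ hfin
  have h3 : (φ.SubF \ NAt).ncard = φ.props.ncard := by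
    rw [h1]
    exact Set.ncard_image_of_injective _ LTL.atom_injective
  unfold LTL.Sz
  omega

/-- Key size bound: `2 * |props φ| ≤ Sz φ + 1`. -/
lemma two_props_le (φ : LTL P) : 2 * φ.props.ncard ≤ φ.Sz + 1 := by
  have h := count_aux φ ∅ (by simp) (by simp)
  simp only [Cov, Set.mem_empty_iff_false, Set.setOf_false, Set.diff_empty] at h
  have h2 := sz_split φ
  omega

end AuxHard3

/-- if some LTL formula of size at most `2m - 1` separates `𝒫` and `𝒩`,
then `Φ` is satisfiable. -/
theorem hard_direction (m : ℕ) (hm : 0 < m) (Φ : List Clause3) (hvars : cnfVars m Φ)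
    (φ : LTL Lit) (hrange : propsInRange m φ) (hsz : φ.Sz ≤ 2 * m - 1)
    (hsep : Separates m Φ φ) :
    ∃ v : ℕ → Bool, cnfSat v Φ := by
  classical
  obtain ⟨hpos, hneg⟩ := hsep
  set A := φ.props with hAdef
  have hAfin : A.Finite := φ.props_finite
  -- any accepted constant word must contain a proposition of φ
  have hne : ∀ α : Set Lit, φ.Sat (constW α) → ∃ p ∈ A, p ∈ α := by
    intro α hα
    by_contra hc
    push_neg at hc
    exact hneg ((LTL.sat_const_congr φ α ∅ (fun p hp => by simp [hc p hp])).1 hα)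
  -- each pair {x_k, x̄_k} meets A
  have hrho : ∀ k < m, ∃ b : Bool, ((k, b) : Lit) ∈ A := by
    intro k hk
    obtain ⟨p, hpA, hpr⟩ := hne (rho k) (hpos _ (Or.inr ⟨k, hk, rfl⟩))
    simp only [rho, Set.mem_insert_iff, Set.mem_singleton_iff] at hpr
    rcases hpr with rfl | rfl
    · exact ⟨true, hpA⟩
    · exact ⟨false, hpA⟩
  -- a canonical choice in each pair
  set g : ℕ → Lit := fun k => if ((k, true) : Lit) ∈ A then (k, true) else (k, false)
    with hgdef
  have hg1 : ∀ k, (g k).1 = k := by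
    intro k
    by_cases h : ((k, true) : Lit) ∈ A <;> simp [hgdef, h]
  have hg : ∀ k < m, g k ∈ A := by
    intro k hk
    by_cases h : ((k, true) : Lit) ∈ A
    · simpa [hgdef, h] using h
    · obtain ⟨b, hb⟩ := hrho k hk
      cases b
      · simpa [hgdef, h] using hb
      · exact absurd hb h
  have hinj : Set.InjOn g ((Finset.range m : Finset ℕ) : Set ℕ) := by
    intro a _ b _ hab
    have := congrArg Prod.fst hab
    rwa [hg1, hg1] at this
  have himg : g '' ((Finset.range m : Finset ℕ) : Set ℕ) ⊆ A := by
    rintro _ ⟨k, hk, rfl⟩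
    exact hg k (by simpa using hk)
  have hcardrange : (((Finset.range m : Finset ℕ) : Set ℕ)).ncard = m := by
    rw [Set.ncard_coe_finset, Finset.card_range]
  have hlow : m ≤ A.ncard := by
    have h1 : (g '' ((Finset.range m : Finset ℕ) : Set ℕ)).ncard = m := by
      rw [Set.ncard_image_of_injOn hinj, hcardrange]
    have h2 := Set.ncard_le_ncard himg hAfin
    omega
  -- upper bound on |A|
  have hup : A.ncard ≤ m := by
    have h1 := two_props_le φ
    have hAe : A.ncard = φ.props.ncard := rfl
    omega
  -- uniqueness: never both polarities
  have huniq : ∀ k < m, ¬(((k, true) : Lit) ∈ A ∧ ((k, false) : Lit) ∈ A) := by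
    rintro k hk ⟨ht, hf⟩
    have hnm : ((k, false) : Lit) ∉ g '' ((Finset.range m : Finset ℕ) : Set ℕ) := by
      rintro ⟨j, _, hj⟩
      have hj1 : j = k := by
        have := congrArg Prod.fst hj
        rwa [hg1] at this
      subst hj1
      rw [hgdef] at hj
      simp [ht] at hj
    have hins : insert ((k, false) : Lit) (g '' ((Finset.range m : Finset ℕ) : Set ℕ)) ⊆ A := by
      rintro x (rfl | hx)
      · exact hf
      · exact himg hx
    have hfing : (g '' ((Finset.range m : Finset ℕ) : Set ℕ)).Finite :=
      Set.Finite.image _ (Set.finite_coe_iff.1 (by infer_instance))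
    have h1 : (insert ((k, false) : Lit) (g '' ((Finset.range m : Finset ℕ) : Set ℕ))).ncard
        = m + 1 := by
      rw [Set.ncard_insert_of_notMem hnm hfing, Set.ncard_image_of_injOn hinj, hcardrange]
    have h2 := Set.ncard_le_ncard hins hAfin
    omega
  -- the valuation
  refine ⟨fun k => if ((k, true) : Lit) ∈ A then true else false, ?_⟩
  have hv : ∀ (k : ℕ) (b : Bool), ((k, b) : Lit) ∈ A →
      (if ((k, true) : Lit) ∈ A then true else false) = b := by
    intro k b hb
    have hkm : k < m := hrange _ hb
    cases b
    · have hnt : ((k, true) : Lit) ∉ A := fun ht => huniq k hkm ⟨ht, hb⟩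
      simp [hnt]
    · simp [hb]
  intro c hc
  obtain ⟨p, hpA, hpc⟩ := hne (clauseSet c) (hpos _ (Or.inl ⟨c, hc, rfl⟩))
  have hvp : (if ((p.1, true) : Lit) ∈ A then true else false) = p.2 := hv p.1 p.2 hpA
  simp only [clauseSet, Set.mem_insert_iff, Set.mem_singleton_iff] at hpc
  rcases hpc with rfl | rfl | rfl
  · exact Or.inl hvp
  · exact Or.inr (Or.inl hvp)
  · exact Or.inr (Or.inr hvp)

end Temporal
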